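/- Let H be a real Hilbert space, (Ω, P) a probability space, K ≥ 1, and let π : Fin K → ℝ be a probability vector. Let η > 0 and let n, E_l be natural numbers with 0 < n ≤ E_l. For each client l ∈ Fin K and each step τ ∈ {0, …, n−1}, let g^l_τ : Ω → H be a Bochner square-integrable random vector, and let G(τ) ≥ 0 and σ_l(τ) ≥ 0 be constants such that ‖E[g^l_τ]‖ ≤ G(τ) and E‖g^l_τ − E[g^l_τ]‖² ≤ σ_l(τ)². Then for every client k ∈ Fin K: E ‖ Σ_{τ=0}^{n−1} η g^k_τ − Σ_{l=1}^{K} π_l Σ_{τ=0}^{n−1} η g^l_τ ‖² ≤ 2 η² E_l Σ_{τ=0}^{n−1} [ (K+1) G(τ)² + σ_k(τ)² + Σ_{l=1}^{K} π_l σ_l(τ)² ]. -/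

import Mathlib

open Finset MeasureTheory

section Aux

variable {H : Type*} [NormedAddCommGroup H] [InnerProductSpace ℝ H] [CompleteSpace H]
variable {Ω : Type*} [MeasurableSpace Ω] {P : Measure Ω} [IsProbabilityMeasure P]

/-- Variance decomposition: `E‖f‖² = ‖Ef‖² + E‖f − Ef‖²`. -/
lemma isfl_var_decomp (f : Ω → H) (hf : MemLp f 2 P) :
    ∫ ω, ‖f ω‖ ^ 2 ∂P
      = ‖∫ ω, f ω ∂P‖ ^ 2 + ∫ ω, ‖f ω - ∫ ω', f ω' ∂P‖ ^ 2 ∂P := by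
  set μ := ∫ ω, f ω ∂P with hμ
  have hfi : Integrable f P := hf.integrable one_le_two
  have hsub : MemLp (fun ω => f ω - μ) 2 P := hf.sub (memLp_const μ)
  have h2 : Integrable (fun ω => ‖f ω - μ‖ ^ 2) P :=
    (memLp_two_iff_integrable_sq_norm hsub.aestronglyMeasurable).1 hsub
  have hfc : Integrable (fun ω => f ω - μ) P := hfi.sub (integrable_const μ)
  have h3 : Integrable (fun ω => (inner ℝ (f ω - μ) μ : ℝ)) P := hfc.inner_const μ
  have key : ∀ ω, ‖f ω‖ ^ 2
      = ‖f ω - μ‖ ^ 2 + (2 * (inner ℝ (f ω - μ) μ : ℝ) + ‖μ‖ ^ 2) := by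
    intro ω
    have h := @norm_add_sq_real H _ _ (f ω - μ) μ
    rw [sub_add_cancel] at h
    linarith
  have hzero : ∫ ω, (inner ℝ (f ω - μ) μ : ℝ) ∂P = 0 := by
    have : ∫ ω, (inner ℝ μ (f ω - μ) : ℝ) ∂P = inner ℝ μ (∫ ω, (f ω - μ) ∂P) :=
      integral_inner hfc μ
    have hμ0 : ∫ ω, (f ω - μ) ∂P = 0 := by
      rw [integral_sub hfi (integrable_const μ)]
      simp [hμ]
    simp only [real_inner_comm]
    rw [this, hμ0, inner_zero_right]
  calc ∫ ω, ‖f ω‖ ^ 2 ∂P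
      = ∫ ω, (‖f ω - μ‖ ^ 2 + (2 * (inner ℝ (f ω - μ) μ : ℝ) + ‖μ‖ ^ 2)) ∂P := by
        exact integral_congr_ae (Filter.Eventually.of_forall key)
    _ = (∫ ω, ‖f ω - μ‖ ^ 2 ∂P)
        + ((∫ ω, 2 * (inner ℝ (f ω - μ) μ : ℝ) ∂P) + ∫ ω, (‖μ‖ ^ 2 : ℝ) ∂P) := by
        have h34 : Integrable (fun ω => 2 * (inner ℝ (f ω - μ) μ : ℝ) + ‖μ‖ ^ 2) P := by
          exact (h3.const_mul 2).add (integrable_const _)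
        have h3' : Integrable (fun ω => 2 * (inner ℝ (f ω - μ) μ : ℝ)) P := h3.const_mul 2
        rw [integral_add h2 h34, integral_add h3' (integrable_const (‖μ‖ ^ 2))]
    _ = ‖μ‖ ^ 2 + ∫ ω, ‖f ω - μ‖ ^ 2 ∂P := by
        rw [integral_const_mul, hzero, integral_const]
        simp [measure_univ]
        ring

/-- Per-client bound: `E ‖Σ_τ η g_τ‖² ≤ η² n Σ_τ (G τ² + σ τ²)`. -/
lemma isfl_client_bound (n : ℕ) (η : ℝ) (f : ℕ → Ω → H) (G s : ℕ → ℝ)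
    (hint : ∀ τ ∈ Finset.range n, MemLp (f τ) 2 P)
    (hG0 : ∀ τ ∈ Finset.range n, 0 ≤ G τ)
    (hGbd : ∀ τ ∈ Finset.range n, ‖∫ ω, f τ ω ∂P‖ ≤ G τ)
    (hσbd : ∀ τ ∈ Finset.range n,
      ∫ ω, ‖f τ ω - ∫ ω', f τ ω' ∂P‖ ^ 2 ∂P ≤ (s τ) ^ 2) :
    ∫ ω, ‖∑ τ ∈ Finset.range n, η • f τ ω‖ ^ 2 ∂P
      ≤ η ^ 2 * n * ∑ τ ∈ Finset.range n, (G τ ^ 2 + s τ ^ 2) := by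
  have hsqint : ∀ τ ∈ Finset.range n, Integrable (fun ω => ‖f τ ω‖ ^ 2) P := by
    intro τ hτ
    exact (memLp_two_iff_integrable_sq_norm (hint τ hτ).aestronglyMeasurable).1 (hint τ hτ)
  have hstep : ∀ τ ∈ Finset.range n, ∫ ω, ‖f τ ω‖ ^ 2 ∂P ≤ G τ ^ 2 + s τ ^ 2 := by
    intro τ hτ
    rw [isfl_var_decomp (f τ) (hint τ hτ)]
    have h1 : ‖∫ ω, f τ ω ∂P‖ ^ 2 ≤ G τ ^ 2 :=
      pow_le_pow_left₀ (norm_nonneg _) (hGbd τ hτ) 2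
    linarith [hσbd τ hτ]
  -- pointwise bound
  have hpt : ∀ ω, ‖∑ τ ∈ Finset.range n, η • f τ ω‖ ^ 2
      ≤ (n : ℝ) * ∑ τ ∈ Finset.range n, η ^ 2 * ‖f τ ω‖ ^ 2 := by
    intro ω
    calc ‖∑ τ ∈ Finset.range n, η • f τ ω‖ ^ 2
        ≤ (∑ τ ∈ Finset.range n, ‖η • f τ ω‖) ^ 2 :=
          pow_le_pow_left₀ (norm_nonneg _) (norm_sum_le _ _) 2
      _ ≤ (Finset.range n).card * ∑ τ ∈ Finset.range n, ‖η • f τ ω‖ ^ 2 :=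
          sq_sum_le_card_mul_sum_sq
      _ = (n : ℝ) * ∑ τ ∈ Finset.range n, η ^ 2 * ‖f τ ω‖ ^ 2 := by
          simp [norm_smul, mul_pow, sq_abs]
  have hSmem : MemLp (fun ω => ∑ τ ∈ Finset.range n, η • f τ ω) 2 P :=
    memLp_finset_sum _ (fun τ hτ => (hint τ hτ).const_smul η)
  have hSint : Integrable (fun ω => ‖∑ τ ∈ Finset.range n, η • f τ ω‖ ^ 2) P :=
    (memLp_two_iff_integrable_sq_norm hSmem.aestronglyMeasurable).1 hSmem
  have hRint : Integrable
      (fun ω => (n : ℝ) * ∑ τ ∈ Finset.range n, η ^ 2 * ‖f τ ω‖ ^ 2) P :=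
    (integrable_finset_sum _ (fun τ hτ => (hsqint τ hτ).const_mul _)).const_mul _
  calc ∫ ω, ‖∑ τ ∈ Finset.range n, η • f τ ω‖ ^ 2 ∂P
      ≤ ∫ ω, (n : ℝ) * ∑ τ ∈ Finset.range n, η ^ 2 * ‖f τ ω‖ ^ 2 ∂P :=
        integral_mono hSint hRint hpt
    _ = (n : ℝ) * ∑ τ ∈ Finset.range n, η ^ 2 * ∫ ω, ‖f τ ω‖ ^ 2 ∂P := by
        rw [integral_const_mul, integral_finset_sum _ (fun τ hτ => (hsqint τ hτ).const_mul _)]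
        congr 1
        exact Finset.sum_congr rfl (fun τ hτ => integral_const_mul _ _)
    _ ≤ (n : ℝ) * ∑ τ ∈ Finset.range n, η ^ 2 * (G τ ^ 2 + s τ ^ 2) := by
        refine mul_le_mul_of_nonneg_left (Finset.sum_le_sum fun τ hτ => ?_) (Nat.cast_nonneg n)
        exact mul_le_mul_of_nonneg_left (hstep τ hτ) (sq_nonneg η)
    _ = η ^ 2 * n * ∑ τ ∈ Finset.range n, (G τ ^ 2 + s τ ^ 2) := by
        rw [← Finset.mul_sum]; ring

/-- Convexity bound: `‖Σ π_l • v_l‖² ≤ Σ π_l ‖v_l‖²` for a probability vector `π`. -/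
lemma isfl_convexity {K : ℕ} (π : Fin K → ℝ) (hπ0 : ∀ l, 0 ≤ π l)
    (hπ1 : ∑ l, π l = 1) (v : Fin K → H) :
    ‖∑ l, π l • v l‖ ^ 2 ≤ ∑ l, π l * ‖v l‖ ^ 2 := by
  have h1 : ‖∑ l, π l • v l‖ ≤ ∑ l, π l * ‖v l‖ := by
    refine (norm_sum_le _ _).trans_eq ?_
    exact Finset.sum_congr rfl (fun l _ => by
      rw [norm_smul, Real.norm_eq_abs, abs_of_nonneg (hπ0 l)])
  have h2 : (∑ l, π l * ‖v l‖) ^ 2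
      ≤ (∑ l, π l) * ∑ l, π l * ‖v l‖ ^ 2 := by
    refine Finset.sum_sq_le_sum_mul_sum_of_sq_eq_mul Finset.univ
      (fun l _ => hπ0 l) (fun l _ => mul_nonneg (hπ0 l) (sq_nonneg _)) ?_
    intro l _
    ring
  calc ‖∑ l, π l • v l‖ ^ 2 ≤ (∑ l, π l * ‖v l‖) ^ 2 :=
        pow_le_pow_left₀ (norm_nonneg _) h1 2
    _ ≤ (∑ l, π l) * ∑ l, π l * ‖v l‖ ^ 2 := h2
    _ = ∑ l, π l * ‖v l‖ ^ 2 := by rw [hπ1, one_mul]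

end Aux

/-- Lemma 1 of the ISFL paper (model deviation bound): the expected squared norm of the
deviation between a client's accumulated stochastic gradient steps and the aggregated ones
is bounded by `2 η² E_l φ_k(t)`. -/
theorem isfl_model_deviation_bound
    {H : Type*} [NormedAddCommGroup H] [InnerProductSpace ℝ H] [CompleteSpace H]
    {Ω : Type*} [MeasurableSpace Ω] (P : Measure Ω) [IsProbabilityMeasure P]
    (K : ℕ) (hK : 1 ≤ K)
    (π : Fin K → ℝ) (hπ0 : ∀ l, 0 ≤ π l) (hπ1 : ∑ l, π l = 1)
    (η : ℝ) (hη : 0 < η) (n El : ℕ) (hn : 0 < n) (hnEl : n ≤ El)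
    (g : Fin K → ℕ → Ω → H) (G : ℕ → ℝ) (σ : Fin K → ℕ → ℝ)
    (hG0 : ∀ τ ∈ Finset.range n, 0 ≤ G τ)
    (hσ0 : ∀ (l : Fin K), ∀ τ ∈ Finset.range n, 0 ≤ σ l τ)
    (hint : ∀ (l : Fin K), ∀ τ ∈ Finset.range n, MemLp (g l τ) 2 P)
    (hGbd : ∀ (l : Fin K), ∀ τ ∈ Finset.range n, ‖∫ ω, g l τ ω ∂P‖ ≤ G τ)
    (hσbd : ∀ (l : Fin K), ∀ τ ∈ Finset.range n,
      ∫ ω, ‖g l τ ω - ∫ ω', g l τ ω' ∂P‖ ^ 2 ∂P ≤ (σ l τ) ^ 2)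
    (k : Fin K) :
    ∫ ω, ‖(∑ τ ∈ Finset.range n, η • g k τ ω) -
        ∑ l, π l • ∑ τ ∈ Finset.range n, η • g l τ ω‖ ^ 2 ∂P ≤
      2 * η ^ 2 * El * ∑ τ ∈ Finset.range n,
        ((K + 1) * (G τ) ^ 2 + (σ k τ) ^ 2 + ∑ l, π l * (σ l τ) ^ 2) := by
  set S : Fin K → Ω → H := fun l ω => ∑ τ ∈ Finset.range n, η • g l τ ω with hS
  have hSmem : ∀ l, MemLp (S l) 2 P := fun l =>
    memLp_finset_sum _ (fun τ hτ => (hint l τ hτ).const_smul η)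
  have hSsq : ∀ l, Integrable (fun ω => ‖S l ω‖ ^ 2) P := fun l =>
    (memLp_two_iff_integrable_sq_norm (hSmem l).aestronglyMeasurable).1 (hSmem l)
  have hclient : ∀ l, ∫ ω, ‖S l ω‖ ^ 2 ∂P
      ≤ η ^ 2 * n * ∑ τ ∈ Finset.range n, (G τ ^ 2 + σ l τ ^ 2) := fun l =>
    isfl_client_bound n η (g l) G (σ l) (hint l) hG0 (hGbd l) (hσbd l)
  set B : Ω → H := fun ω => ∑ l, π l • S l ω with hB
  have hBmem : MemLp B 2 P :=
    memLp_finset_sum _ (fun l _ => (hSmem l).const_smul (π l))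
  have hBsq : Integrable (fun ω => ‖B ω‖ ^ 2) P :=
    (memLp_two_iff_integrable_sq_norm hBmem.aestronglyMeasurable).1 hBmem
  -- bound on E‖B‖²
  have hBptw : ∀ ω, ‖B ω‖ ^ 2 ≤ ∑ l, π l * ‖S l ω‖ ^ 2 := fun ω =>
    isfl_convexity π hπ0 hπ1 (fun l => S l ω)
  have hBint : ∫ ω, ‖B ω‖ ^ 2 ∂P ≤ ∑ l, π l * ∫ ω, ‖S l ω‖ ^ 2 ∂P := by
    calc ∫ ω, ‖B ω‖ ^ 2 ∂P ≤ ∫ ω, ∑ l, π l * ‖S l ω‖ ^ 2 ∂P :=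
          integral_mono hBsq
            (integrable_finset_sum _ (fun l _ => (hSsq l).const_mul _)) hBptw
      _ = ∑ l, π l * ∫ ω, ‖S l ω‖ ^ 2 ∂P := by
          rw [integral_finset_sum _ (fun l _ => (hSsq l).const_mul _)]
          exact Finset.sum_congr rfl (fun l _ => integral_const_mul _ _)
  have hBbd : ∫ ω, ‖B ω‖ ^ 2 ∂P
      ≤ η ^ 2 * n * ∑ τ ∈ Finset.range n, (G τ ^ 2 + ∑ l, π l * σ l τ ^ 2) := by
    refine hBint.trans ?_
    have heq : ∑ l, π l * (η ^ 2 * n * ∑ τ ∈ Finset.range n, (G τ ^ 2 + σ l τ ^ 2))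
        = η ^ 2 * n * ∑ τ ∈ Finset.range n, (G τ ^ 2 + ∑ l, π l * σ l τ ^ 2) := by
      calc ∑ l, π l * (η ^ 2 * n * ∑ τ ∈ Finset.range n, (G τ ^ 2 + σ l τ ^ 2))
          = ∑ l, ∑ τ ∈ Finset.range n, π l * (η ^ 2 * n * (G τ ^ 2 + σ l τ ^ 2)) := by
            refine Finset.sum_congr rfl fun l _ => ?_
            rw [Finset.mul_sum, Finset.mul_sum]
        _ = ∑ τ ∈ Finset.range n, ∑ l, π l * (η ^ 2 * n * (G τ ^ 2 + σ l τ ^ 2)) :=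
            Finset.sum_comm
        _ = η ^ 2 * n * ∑ τ ∈ Finset.range n, (G τ ^ 2 + ∑ l, π l * σ l τ ^ 2) := by
            rw [Finset.mul_sum]
            refine Finset.sum_congr rfl fun τ _ => ?_
            have h : ∀ l, π l * (η ^ 2 * n * (G τ ^ 2 + σ l τ ^ 2))
                = η ^ 2 * ↑n * G τ ^ 2 * π l + η ^ 2 * ↑n * (π l * σ l τ ^ 2) :=
              fun l => by ring
            simp only [h, Finset.sum_add_distrib, ← Finset.mul_sum, hπ1]
            ring
    rw [← heq]
    exact Finset.sum_le_sum fun l _ => mul_le_mul_of_nonneg_left (hclient l) (hπ0 l)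
  -- combine with ‖A − B‖² ≤ 2‖A‖² + 2‖B‖²
  have hABmem : MemLp (fun ω => S k ω - B ω) 2 P := (hSmem k).sub hBmem
  have hABsq : Integrable (fun ω => ‖S k ω - B ω‖ ^ 2) P :=
    (memLp_two_iff_integrable_sq_norm hABmem.aestronglyMeasurable).1 hABmem
  have hptw : ∀ ω, ‖S k ω - B ω‖ ^ 2 ≤ 2 * ‖S k ω‖ ^ 2 + 2 * ‖B ω‖ ^ 2 := by
    intro ω
    have h := norm_sub_le (S k ω) (B ω)
    nlinarith [norm_nonneg (S k ω - B ω), norm_nonneg (S k ω), norm_nonneg (B ω),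
      sq_nonneg (‖S k ω‖ - ‖B ω‖)]
  have hmain : ∫ ω, ‖S k ω - B ω‖ ^ 2 ∂P
      ≤ 2 * ∫ ω, ‖S k ω‖ ^ 2 ∂P + 2 * ∫ ω, ‖B ω‖ ^ 2 ∂P := by
    calc ∫ ω, ‖S k ω - B ω‖ ^ 2 ∂P
        ≤ ∫ ω, (2 * ‖S k ω‖ ^ 2 + 2 * ‖B ω‖ ^ 2) ∂P :=
          integral_mono hABsq (((hSsq k).const_mul 2).add (hBsq.const_mul 2)) hptw
      _ = 2 * ∫ ω, ‖S k ω‖ ^ 2 ∂P + 2 * ∫ ω, ‖B ω‖ ^ 2 ∂P := by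
          rw [integral_add ((hSsq k).const_mul 2) (hBsq.const_mul 2),
            integral_const_mul, integral_const_mul]
  have hA := hclient k
  -- final arithmetic
  have hfinal : 2 * (η ^ 2 * n * ∑ τ ∈ Finset.range n, (G τ ^ 2 + σ k τ ^ 2))
      + 2 * (η ^ 2 * n * ∑ τ ∈ Finset.range n, (G τ ^ 2 + ∑ l, π l * σ l τ ^ 2))
      ≤ 2 * η ^ 2 * El * ∑ τ ∈ Finset.range n,
        ((K + 1) * (G τ) ^ 2 + (σ k τ) ^ 2 + ∑ l, π l * (σ l τ) ^ 2) := by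
    have hsum : ∑ τ ∈ Finset.range n, (G τ ^ 2 + σ k τ ^ 2)
        + ∑ τ ∈ Finset.range n, (G τ ^ 2 + ∑ l, π l * σ l τ ^ 2)
        = ∑ τ ∈ Finset.range n, (2 * G τ ^ 2 + σ k τ ^ 2 + ∑ l, π l * σ l τ ^ 2) := by
      rw [← Finset.sum_add_distrib]
      exact Finset.sum_congr rfl (fun τ _ => by ring)
    have e1 : 2 * (η ^ 2 * n * ∑ τ ∈ Finset.range n, (G τ ^ 2 + σ k τ ^ 2))
        + 2 * (η ^ 2 * n * ∑ τ ∈ Finset.range n, (G τ ^ 2 + ∑ l, π l * σ l τ ^ 2))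
        = 2 * η ^ 2 * n * ∑ τ ∈ Finset.range n,
          (2 * G τ ^ 2 + σ k τ ^ 2 + ∑ l, π l * σ l τ ^ 2) := by
      rw [← hsum]; ring
    rw [e1]
    have hterm : ∀ τ ∈ Finset.range n,
        2 * G τ ^ 2 + σ k τ ^ 2 + ∑ l, π l * σ l τ ^ 2
          ≤ (K + 1) * (G τ) ^ 2 + (σ k τ) ^ 2 + ∑ l, π l * (σ l τ) ^ 2 := by
      intro τ hτ
      have h2K : (2 : ℝ) ≤ (K : ℝ) + 1 := by
        have : (1 : ℝ) ≤ (K : ℝ) := by exact_mod_cast hK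
        linarith
      have := mul_le_mul_of_nonneg_right h2K (sq_nonneg (G τ))
      linarith
    have hnonneg : ∀ τ ∈ Finset.range n,
        0 ≤ 2 * G τ ^ 2 + σ k τ ^ 2 + ∑ l, π l * σ l τ ^ 2 := by
      intro τ hτ
      have : 0 ≤ ∑ l, π l * σ l τ ^ 2 :=
        Finset.sum_nonneg (fun l _ => mul_nonneg (hπ0 l) (sq_nonneg _))
      positivity
    calc 2 * η ^ 2 * n * ∑ τ ∈ Finset.range n,
          (2 * G τ ^ 2 + σ k τ ^ 2 + ∑ l, π l * σ l τ ^ 2)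
        ≤ 2 * η ^ 2 * El * ∑ τ ∈ Finset.range n,
          (2 * G τ ^ 2 + σ k τ ^ 2 + ∑ l, π l * σ l τ ^ 2) := by
          have hEl : (n : ℝ) ≤ (El : ℝ) := by exact_mod_cast hnEl
          have hsn : 0 ≤ ∑ τ ∈ Finset.range n,
              (2 * G τ ^ 2 + σ k τ ^ 2 + ∑ l, π l * σ l τ ^ 2) :=
            Finset.sum_nonneg hnonneg
          have := mul_le_mul_of_nonneg_right
            (mul_le_mul_of_nonneg_left hEl (by positivity : (0:ℝ) ≤ 2 * η ^ 2)) hsn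
          linarith
      _ ≤ 2 * η ^ 2 * El * ∑ τ ∈ Finset.range n,
          ((K + 1) * (G τ) ^ 2 + (σ k τ) ^ 2 + ∑ l, π l * (σ l τ) ^ 2) := by
          have h1 : (0:ℝ) ≤ 2 * η ^ 2 * El := by positivity
          exact mul_le_mul_of_nonneg_left (Finset.sum_le_sum hterm) h1
  calc ∫ ω, ‖S k ω - B ω‖ ^ 2 ∂P
      ≤ 2 * ∫ ω, ‖S k ω‖ ^ 2 ∂P + 2 * ∫ ω, ‖B ω‖ ^ 2 ∂P := hmain
    _ ≤ 2 * (η ^ 2 * n * ∑ τ ∈ Finset.range n, (G τ ^ 2 + σ k τ ^ 2))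
        + 2 * (η ^ 2 * n * ∑ τ ∈ Finset.range n, (G τ ^ 2 + ∑ l, π l * σ l τ ^ 2)) := by
        have := hA
        have := hBbd
        linarith
    _ ≤ _ := hfinal
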